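/- For all positive integers m and e with e ≤ m, A_2(m,e) ≤ M_1(2m, 2e; 1) ≤ A_4(2m, 2e); that is, the maximum size of a 1-GC-prefix-balanced set of DNA words of length 2m with pairwise Hamming distance at least 2e is at least the maximum size of a binary code of length m with minimum distance e, and at most the maximum size of a quaternary code of length 2m with minimum distance 2e. -/

import Mathlib

/-- The four-letter DNA alphabet. -/
inductive DNA | A | T | G | C
deriving DecidableEq

/-- Hamming distance between two words (of equal length) given as lists. -/
def hammingD {α : Type*} [DecidableEq α] (x y : List α) : ℕ :=
  (x.zip y).countP (fun p => decide (p.1 ≠ p.2))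

/-- A binary word has `D`-bounded running digital sum if in every prefix the
numbers of ones and zeros differ by at most `D`. -/
def brds (D : ℕ) (w : List Bool) : Prop :=
  ∀ k ≤ w.length,
    (((w.take k).count true : ℤ) - ((w.take k).count false : ℤ)).natAbs ≤ D

/-- The letters `G`, `C` of the DNA alphabet. -/
def isGC : DNA → Bool
  | DNA.G => true
  | DNA.C => true
  | _ => false

/-- A DNA word is `D`-GC-prefix-balanced if in every prefix the number of
letters from {G,C} and the number of letters from {A,T} differ by at most `D`. -/
def gcpb (D : ℕ) (w : List DNA) : Prop :=
  ∀ k ≤ w.length,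
    (((w.take k).countP isGC : ℤ) - ((w.take k).countP (fun c => !(isGC c)) : ℤ)).natAbs ≤ D

/-- A word is self-uncorrelated if no proper nonempty prefix equals the suffix
of the same length. -/
def selfUncorr {α : Type*} (w : List α) : Prop :=
  ∀ k, 1 ≤ k → k ≤ w.length - 1 → w.take k ≠ w.drop (w.length - k)

/-- A set of words is mutually uncorrelated if every word is self-uncorrelated
and for every ordered pair of distinct words `x`, `y` no nonempty prefix of `y`
equals a suffix of `x` of the same length. -/
def mutUncorr {α : Type*} (S : Set (List α)) : Prop :=
  (∀ w ∈ S, selfUncorr w) ∧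
  ∀ x ∈ S, ∀ y ∈ S, x ≠ y →
    ∀ k, 1 ≤ k → k ≤ x.length → y.take k ≠ x.drop (x.length - k)

/-- A Dyck word: equal numbers of ones and zeros, and every prefix has at least
as many ones as zeros. -/
def isDyck (w : List Bool) : Prop :=
  w.count true = w.count false ∧
  ∀ k ≤ w.length, (w.take k).count false ≤ (w.take k).count true

/-- The height of a (Dyck) word is at most `D`: in every prefix the number of
ones exceeds the number of zeros by at most `D`. -/
def heightLe (D : ℕ) (w : List Bool) : Prop :=
  ∀ k ≤ w.length, ((w.take k).count true : ℤ) - ((w.take k).count false : ℤ) ≤ (D : ℤ)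

/-- Maximum size of a code of length `n` over the alphabet `Fin q` with
pairwise Hamming distance at least `d`. -/
noncomputable def maxCode (q n d : ℕ) : ℕ :=
  sSup {M : ℕ | ∃ C : Finset (List (Fin q)), C.card = M ∧
    (∀ w ∈ C, w.length = n) ∧
    ∀ x ∈ C, ∀ y ∈ C, x ≠ y → d ≤ hammingD x y}

/-- `M₁ n d D`: maximum size of a `D`-GCPB set of DNA words of length `n`
with pairwise Hamming distance at least `d`. -/
noncomputable def M1 (n d D : ℕ) : ℕ :=
  sSup {M : ℕ | ∃ C : Finset (List DNA), C.card = M ∧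
    (∀ w ∈ C, w.length = n) ∧ (∀ w ∈ C, gcpb D w) ∧
    ∀ x ∈ C, ∀ y ∈ C, x ≠ y → d ≤ hammingD x y}


-- Auxiliary material
instance : Fintype DNA := ⟨{DNA.A, DNA.T, DNA.G, DNA.C}, fun x => by cases x <;> simp⟩
instance : Inhabited DNA := ⟨DNA.A⟩

section Aux

lemma card_code_le {α : Type*} [DecidableEq α] [Fintype α] [Inhabited α] (n : ℕ)
    (C : Finset (List α)) (h : ∀ w ∈ C, w.length = n) :
    C.card ≤ Fintype.card α ^ n := by
  classical
  have : C.card ≤ (Finset.univ : Finset (Fin n → α)).card := by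
    apply Finset.card_le_card_of_injOn (fun w (i : Fin n) => w.getD i.val default)
      (fun _ _ => Finset.mem_univ _)
    intro x hx y hy hxy
    have hxn := h x hx; have hyn := h y hy
    apply List.ext_getElem (by omega)
    intro i h1 h2
    have := congrFun hxy (⟨i, by omega⟩ : Fin n)
    dsimp only at this
    rwa [List.getD_eq_getElem x default h1, List.getD_eq_getElem y default h2] at this
  simpa [Fintype.card_fun] using this

lemma hammingD_map {α β : Type*} [DecidableEq α] [DecidableEq β] {f : α → β}
    (hf : Function.Injective f) (x y : List α) :
    hammingD (x.map f) (y.map f) = hammingD x y := by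
  unfold hammingD
  rw [List.zip_map, List.countP_map]
  apply List.countP_congr
  intro p _
  simp [hf.ne_iff]

def d4 : DNA → Fin 4
  | DNA.A => 0 | DNA.T => 1 | DNA.G => 2 | DNA.C => 3

lemma d4_inj : Function.Injective d4 := by
  intro a b h; cases a <;> cases b <;> simp_all [d4] <;> exact absurd h (by decide)

def enc2 : Fin 2 → List DNA := fun b =>
  if b = 0 then [DNA.A, DNA.C] else [DNA.G, DNA.T]

def encB (w : List (Fin 2)) : List DNA := w.flatMap enc2

lemma enc2_len (b : Fin 2) : (enc2 b).length = 2 := by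
  unfold enc2; split <;> rfl

lemma enc2_inj : Function.Injective enc2 := by
  intro a b h; fin_cases a <;> fin_cases b <;> simp_all [enc2]

lemma encB_len (w : List (Fin 2)) : (encB w).length = 2 * w.length := by
  induction w with
  | nil => rfl
  | cons a w ih =>
    simp only [encB, List.flatMap_cons, List.length_append, List.length_cons]
    simp only [encB] at ih
    rw [enc2_len, ih]
    ring

lemma encB_inj : Function.Injective encB := by
  intro x y h
  induction x generalizing y with
  | nil =>
    cases y with
    | nil => rfl
    | cons b ys =>
      exfalso
      have := congrArg List.length h
      rw [encB_len, encB_len] at this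
      simp at this
  | cons a xs ih =>
    cases y with
    | nil =>
      exfalso
      have := congrArg List.length h
      rw [encB_len, encB_len] at this
      simp at this
    | cons b ys =>
      simp only [encB, List.flatMap_cons] at h
      obtain ⟨h1, h2⟩ := List.append_inj h (by rw [enc2_len, enc2_len])
      rw [enc2_inj h1, ih h2]

lemma hammingD_cons {α : Type*} [DecidableEq α] (a b : α) (x y : List α) :
    hammingD (a :: x) (b :: y) = (if a = b then 0 else 1) + hammingD x y := by
  unfold hammingD
  rw [List.zip_cons_cons, List.countP_cons]
  by_cases hab : a = b <;> simp [hab] <;> omega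

lemma hammingD_encB (x y : List (Fin 2)) (h : x.length = y.length) :
    hammingD (encB x) (encB y) = 2 * hammingD x y := by
  induction x generalizing y with
  | nil =>
    cases y with
    | nil => rfl
    | cons b ys => simp at h
  | cons a xs ih =>
    cases y with
    | nil => simp at h
    | cons b ys =>
      simp only [List.length_cons] at h
      have key : hammingD (encB (a :: xs)) (encB (b :: ys)) =
          hammingD (enc2 a) (enc2 b) + hammingD (encB xs) (encB ys) := by
        simp only [encB, List.flatMap_cons]
        unfold hammingD
        rw [List.zip_append (by rw [enc2_len, enc2_len]), List.countP_append]
      rw [key, ih ys (by omega), hammingD_cons]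
      by_cases hab : a = b
      · subst hab
        have : hammingD (enc2 a) (enc2 a) = 0 := by
          fin_cases a <;> decide
        rw [this]; simp
      · have : hammingD (enc2 a) (enc2 b) = 2 := by
          fin_cases a <;> fin_cases b <;> first | decide | exact absurd rfl hab
        rw [this]; simp [hab]; ring

lemma enc2_countP (b : Fin 2) :
    (enc2 b).countP isGC = 1 ∧ (enc2 b).countP (fun c => !(isGC c)) = 1 := by
  fin_cases b <;> decide

lemma gcpb_encB (w : List (Fin 2)) : gcpb 1 (encB w) := by
  induction w with
  | nil =>
    intro k hk
    simp only [encB, List.flatMap_nil, List.length_nil, Nat.le_zero] at hk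
    subst hk; simp
  | cons a w ih =>
    intro k hk
    rw [encB_len] at hk
    simp only [List.length_cons] at hk
    obtain ⟨c1, c2, hc, hone⟩ : ∃ c1 c2, enc2 a = [c1, c2] ∧
        ((isGC c1 = true ∧ isGC c2 = false) ∨ (isGC c1 = false ∧ isGC c2 = true)) := by
      fin_cases a
      · exact ⟨DNA.A, DNA.C, rfl, Or.inr (by decide)⟩
      · exact ⟨DNA.G, DNA.T, rfl, Or.inl (by decide)⟩
    have hw : encB (a :: w) = c1 :: c2 :: encB w := by
      simp only [encB, List.flatMap_cons, hc]; rfl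
    rw [hw]
    match k with
    | 0 => simp
    | 1 =>
      simp only [List.take_succ_cons, List.take_zero]
      rcases hone with ⟨h1, _⟩ | ⟨h1, _⟩ <;> simp [List.countP_cons, h1]
    | (k + 2) =>
      simp only [List.take_succ_cons, List.countP_cons]
      have hk' : k ≤ (encB w).length := by rw [encB_len]; omega
      have := ih k hk'
      rcases hone with ⟨h1, h2⟩ | ⟨h1, h2⟩ <;>
        · simp only [h1, h2, Bool.not_true, Bool.not_false, if_true, if_false]
          push_cast
          convert this using 2
          ring

end Aux

/-- `A₂(m,e) ≤ M₁(2m, 2e; 1) ≤ A₄(2m, 2e)`. -/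
theorem stmt3 (m e : ℕ) (hm : 0 < m) (he : 0 < e) (hem : e ≤ m) :
    maxCode 2 m e ≤ M1 (2 * m) (2 * e) 1 ∧
    M1 (2 * m) (2 * e) 1 ≤ maxCode 4 (2 * m) (2 * e) := by
  classical
  have bddM : BddAbove {M : ℕ | ∃ C : Finset (List DNA), C.card = M ∧
      (∀ w ∈ C, w.length = 2 * m) ∧ (∀ w ∈ C, gcpb 1 w) ∧
      ∀ x ∈ C, ∀ y ∈ C, x ≠ y → 2 * e ≤ hammingD x y} := by
    refine ⟨Fintype.card DNA ^ (2 * m), ?_⟩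
    rintro M ⟨C, rfl, hl, -, -⟩
    exact card_code_le (2 * m) C hl
  have bdd4 : BddAbove {M : ℕ | ∃ C : Finset (List (Fin 4)), C.card = M ∧
      (∀ w ∈ C, w.length = 2 * m) ∧
      ∀ x ∈ C, ∀ y ∈ C, x ≠ y → 2 * e ≤ hammingD x y} := by
    refine ⟨Fintype.card (Fin 4) ^ (2 * m), ?_⟩
    rintro M ⟨C, rfl, hl, -⟩
    exact card_code_le (2 * m) C hl
  constructor
  · -- maxCode 2 m e ≤ M1
    unfold maxCode M1
    refine csSup_le ⟨0, ?_⟩ ?_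
    · exact ⟨∅, by simp, by simp, by simp⟩
    rintro M ⟨C, rfl, hl, hd⟩
    apply le_csSup bddM
    refine ⟨C.image encB, ?_, ?_, ?_, ?_⟩
    · exact Finset.card_image_of_injective C encB_inj
    · intro w hw
      obtain ⟨x, hx, rfl⟩ := Finset.mem_image.mp hw
      rw [encB_len, hl x hx]
    · intro w hw
      obtain ⟨x, _, rfl⟩ := Finset.mem_image.mp hw
      exact gcpb_encB x
    · intro x' hx' y' hy' hne
      obtain ⟨x, hx, rfl⟩ := Finset.mem_image.mp hx'
      obtain ⟨y, hy, rfl⟩ := Finset.mem_image.mp hy'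
      have hxy : x ≠ y := fun h => hne (by rw [h])
      rw [hammingD_encB x y (by rw [hl x hx, hl y hy])]
      exact Nat.mul_le_mul_left 2 (hd x hx y hy hxy)
  · -- M1 ≤ maxCode 4
    unfold maxCode M1
    refine csSup_le ⟨0, ?_⟩ ?_
    · exact ⟨∅, by simp, by simp, by simp, by simp⟩
    rintro M ⟨C, rfl, hl, -, hd⟩
    apply le_csSup bdd4
    refine ⟨C.image (List.map d4), ?_, ?_, ?_⟩
    · exact Finset.card_image_of_injective C (List.map_injective_iff.mpr d4_inj)
    · intro w hw
      obtain ⟨x, hx, rfl⟩ := Finset.mem_image.mp hw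
      rw [List.length_map]; exact hl x hx
    · intro x' hx' y' hy' hne
      obtain ⟨x, hx, rfl⟩ := Finset.mem_image.mp hx'
      obtain ⟨y, hy, rfl⟩ := Finset.mem_image.mp hy'
      have hxy : x ≠ y := fun h => hne (by rw [h])
      rw [hammingD_map d4_inj]
      exact hd x hx y hy hxy
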